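/- arXiv:1203.0501 — 2 statements merged into one kernel-verified Lean document; each statement's English description precedes it below -/
import Mathlib

section
/- Let ξ_1, ..., ξ_N be nonzero complex numbers and σ a permutation of {1, ..., N}. Then Π over pairs (i, j) with i < j and σ(i) > σ(j) of (ξ_{σ(i)}/ξ_{σ(j)}) equals Π_{i=1}^{N} ξ_{σ(i)}^{σ(i) − i}, equivalently Π_{i=1}^N ξ_i^{i − σ^{-1}(i)}. -/
open Finset

private lemma card_lt_fin {N : ℕ} (i : Fin N) :
    (univ.filter (fun j : Fin N => j < i)).card = (i : ℕ) := by
  rw [← Fin.card_Iio i]; congr 1; ext j; simp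

private lemma card_perm_lt {N : ℕ} (σ : Equiv.Perm (Fin N)) (i : Fin N) :
    (univ.filter (fun j : Fin N => σ j < σ i)).card = ((σ i : ℕ)) := by
  rw [← card_lt_fin (σ i)]
  exact Finset.card_nbij' (fun j => σ j) (fun k => σ⁻¹ k)
    (by intro a ha; simp only [mem_coe, mem_filter, mem_univ, true_and] at ha ⊢; exact ha)
    (by intro a ha; simp only [mem_coe, mem_filter, mem_univ, true_and] at ha ⊢; simpa using ha)
    (by intro a _; simp) (by intro a _; simp)

private lemma key_count {N : ℕ} (σ : Equiv.Perm (Fin N)) (i : Fin N) :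
    ((univ.filter (fun j : Fin N => i < j ∧ σ j < σ i)).card : ℤ)
      - (univ.filter (fun j : Fin N => j < i ∧ σ i < σ j)).card
      = ((σ i : ℕ) : ℤ) - ((i : ℕ) : ℤ) := by
  have e1 : (univ.filter (fun j : Fin N => j < i)).filter (fun j => σ j < σ i)
      = univ.filter (fun j : Fin N => j < i ∧ σ j < σ i) := by
    rw [Finset.filter_filter]
  have e2 : (univ.filter (fun j : Fin N => j < i)).filter (fun j => ¬ σ j < σ i)
      = univ.filter (fun j : Fin N => j < i ∧ σ i < σ j) := by
    rw [Finset.filter_filter]; ext j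
    simp only [mem_filter, mem_univ, true_and]
    constructor
    · rintro ⟨hji, h⟩
      exact ⟨hji, lt_of_le_of_ne (not_lt.mp h)
        (fun he => absurd (σ.injective he) (ne_of_lt hji).symm)⟩
    · rintro ⟨hji, h⟩; exact ⟨hji, not_lt.mpr h.le⟩
  have e3 : (univ.filter (fun j : Fin N => σ j < σ i)).filter (fun j => j < i)
      = univ.filter (fun j : Fin N => j < i ∧ σ j < σ i) := by
    rw [Finset.filter_filter]; ext j
    simp only [mem_filter, mem_univ, true_and]; tauto
  have e4 : (univ.filter (fun j : Fin N => σ j < σ i)).filter (fun j => ¬ j < i)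
      = univ.filter (fun j : Fin N => i < j ∧ σ j < σ i) := by
    rw [Finset.filter_filter]; ext j
    simp only [mem_filter, mem_univ, true_and]
    constructor
    · rintro ⟨hs, h⟩
      exact ⟨lt_of_le_of_ne (not_lt.mp h)
        (fun he => absurd (congrArg σ he.symm) (ne_of_lt hs)), hs⟩
    · rintro ⟨h, hs⟩; exact ⟨hs, not_lt.mpr h.le⟩
  have h1 := Finset.card_filter_add_card_filter_not
    (s := univ.filter (fun j : Fin N => j < i)) (p := fun j => σ j < σ i)

  have h2 := Finset.card_filter_add_card_filter_not
    (s := univ.filter (fun j : Fin N => σ j < σ i)) (p := fun j => j < i)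

  rw [e1, e2, card_lt_fin] at h1
  rw [e3, e4, card_perm_lt] at h2
  omega

theorem stmt_10 (N : ℕ) (ξ : Fin N → ℂ) (hξ : ∀ i, ξ i ≠ 0) (σ : Equiv.Perm (Fin N)) :
    (∏ p ∈ Finset.univ.filter (fun p : Fin N × Fin N => p.1 < p.2 ∧ σ p.2 < σ p.1),
        ξ (σ p.1) / ξ (σ p.2)) =
      ∏ i : Fin N, ξ (σ i) ^ (((σ i : ℕ) : ℤ) - ((i : ℕ) : ℤ)) ∧
    (∏ p ∈ Finset.univ.filter (fun p : Fin N × Fin N => p.1 < p.2 ∧ σ p.2 < σ p.1),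
        ξ (σ p.1) / ξ (σ p.2)) =
      ∏ i : Fin N, ξ i ^ (((i : ℕ) : ℤ) - ((σ⁻¹ i : Fin N) : ℤ)) := by
  set S := Finset.univ.filter (fun p : Fin N × Fin N => p.1 < p.2 ∧ σ p.2 < σ p.1) with hS
  have ha : ∀ i : Fin N, (S.filter (fun p => p.1 = i)).card
      = (univ.filter (fun j : Fin N => i < j ∧ σ j < σ i)).card := by
    intro i
    apply Finset.card_nbij' (fun p => p.2) (fun j => (i, j))
    · intro p hp
      simp only [hS, Finset.mem_coe, Finset.mem_filter, Finset.mem_univ, true_and] at hp ⊢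
      obtain ⟨⟨h1, h2⟩, h3⟩ := hp
      exact ⟨h3 ▸ h1, h3 ▸ h2⟩
    · intro j hj
      simp only [hS, Finset.mem_coe, Finset.mem_filter, Finset.mem_univ, true_and] at hj ⊢
      exact ⟨hj, trivial⟩
    · intro p hp
      simp only [hS, Finset.mem_coe, Finset.mem_filter] at hp
      exact Prod.ext hp.2.symm rfl
    · intro j _; rfl
  have hb : ∀ i : Fin N, (S.filter (fun p => p.2 = i)).card
      = (univ.filter (fun j : Fin N => j < i ∧ σ i < σ j)).card := by
    intro i
    apply Finset.card_nbij' (fun p => p.1) (fun j => (j, i))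
    · intro p hp
      simp only [hS, Finset.mem_coe, Finset.mem_filter, Finset.mem_univ, true_and] at hp ⊢
      obtain ⟨⟨h1, h2⟩, h3⟩ := hp
      exact ⟨h3 ▸ h1, h3 ▸ h2⟩
    · intro j hj
      simp only [hS, Finset.mem_coe, Finset.mem_filter, Finset.mem_univ, true_and] at hj ⊢
      exact ⟨hj, trivial⟩
    · intro p hp
      simp only [hS, Finset.mem_coe, Finset.mem_filter] at hp
      exact Prod.ext rfl hp.2.symm
    · intro j _; rfl
  have hnum : (∏ p ∈ S, ξ (σ p.1))
      = ∏ i : Fin N, ξ (σ i) ^ (S.filter (fun p => p.1 = i)).card := by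
    rw [← Finset.prod_fiberwise_of_maps_to' (t := univ) (g := fun p : Fin N × Fin N => p.1)
      (fun _ _ => Finset.mem_univ _) (fun i => ξ (σ i))]
    exact Finset.prod_congr rfl (fun i _ => Finset.prod_const _)
  have hden : (∏ p ∈ S, ξ (σ p.2))
      = ∏ i : Fin N, ξ (σ i) ^ (S.filter (fun p => p.2 = i)).card := by
    rw [← Finset.prod_fiberwise_of_maps_to' (t := univ) (g := fun p : Fin N × Fin N => p.2)
      (fun _ _ => Finset.mem_univ _) (fun i => ξ (σ i))]
    exact Finset.prod_congr rfl (fun i _ => Finset.prod_const _)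
  have main : (∏ p ∈ S, ξ (σ p.1) / ξ (σ p.2))
      = ∏ i : Fin N, ξ (σ i) ^ (((σ i : ℕ) : ℤ) - ((i : ℕ) : ℤ)) := by
    rw [Finset.prod_div_distrib, hnum, hden, ← Finset.prod_div_distrib]
    apply Finset.prod_congr rfl
    intro i _
    rw [ha, hb, ← zpow_natCast, ← zpow_natCast, ← zpow_sub₀ (hξ (σ i)), key_count]
  refine ⟨main, ?_⟩
  rw [main, ← Equiv.prod_comp σ (fun i => ξ i ^ (((i : ℕ) : ℤ) - ((σ⁻¹ i : Fin N) : ℤ)))]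
  apply Finset.prod_congr rfl
  intro i _
  congr 1
  rw [Equiv.Perm.inv_def, Equiv.symm_apply_apply]
end

section
/- Let λ, μ ∈ ℝ with λ + μ = 1 and 1/2 < μ ≤ 1, and let c = μ/λ if λ ≠ 0 and c = ∞ if λ = 0. Suppose x_2 − x_1 + y_2 − y_1 ≥ 0 and 1 < R_1 < R_2 < c. Then the double contour integral ∮_{|ξ_2|=R_2} ∮_{|ξ_1|=R_1} [(μ + λ ξ_2 ξ_1 − ξ_1)/(μ + λ ξ_2 ξ_1 − ξ_2)] ξ_2^{x_1 − y_2 − 1} ξ_1^{x_2 − y_1 − 1} dξ_1 dξ_2 = 0. -/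
open MeasureTheory Finset Metric Filter

theorem my19_sphere_ne_zero {R : ℝ} (hR : 0 < R) {z : ℂ} (hz : z ∈ sphere (0:ℂ) R) : z ≠ 0 := by
  simp only [mem_sphere_iff_norm, sub_zero] at hz
  intro h; rw [h] at hz; simp at hz; linarith

theorem my19_finset_sum {ι : Type} (s : Finset ι) (f : ι → ℂ → ℂ) (c : ℂ) (R : ℝ)
    (h : ∀ i ∈ s, CircleIntegrable (f i) c R) :
    (∮ z in C(c, R), ∑ i ∈ s, f i z) = ∑ i ∈ s, ∮ z in C(c, R), f i z := by
  simp only [circleIntegral, Finset.smul_sum]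
  exact intervalIntegral.integral_finset_sum (fun i hi => (h i hi).out)

theorem my19_monomial_int (a : ℤ) {R : ℝ} (hR : 0 < R) (c : ℂ) :
    CircleIntegrable (fun z => c * z ^ a) 0 R := by
  apply ContinuousOn.circleIntegrable hR.le
  exact continuousOn_const.mul (ContinuousOn.zpow₀ continuousOn_id a
    (fun z hz => Or.inl (my19_sphere_ne_zero hR hz)))

theorem my19_zpow {a : ℤ} (ha : a ≠ -1) (R : ℝ) : (∮ z in C((0:ℂ), R), z ^ a) = 0 := by
  simpa using circleIntegral.integral_sub_zpow_of_ne ha 0 0 R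

theorem my19_key (lam mu R1 R2 : ℝ) (hsum : lam + mu = 1) (hmu2 : mu ≤ 1) (h1 : 1 < R1)
    (h12 : R1 < R2) (hc : lam ≠ 0 → R2 < mu / lam) : mu + lam * R1 * R2 < R2 := by
  have hlam0 : 0 ≤ lam := by linarith
  rcases eq_or_lt_of_le hlam0 with h0 | hpos
  · rw [← h0]; simp; linarith
  · have h2 := hc (ne_of_gt hpos)
    have hlr : R2 * lam < mu := (lt_div_iff₀ hpos).mp h2
    nlinarith [mul_pos (show (0:ℝ) < R2 - 1 by linarith) (show (0:ℝ) < mu - lam * R2 by linarith),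
      mul_pos (mul_pos hpos (show (0:ℝ) < R2 by linarith)) (show (0:ℝ) < R2 - R1 by linarith)]

noncomputable def my19_P (Mc L : ℂ) (R1 : ℝ) (A B : ℤ) (N : ℕ) (ξ2 : ℂ) : ℂ :=
  ∑ k ∈ Finset.range N, ∑ j ∈ Finset.range (k+2),
    ((((k+1).choose j : ℂ) * Mc^(k+1-j) * L^j * (∮ ξ1 in C(0,R1), ξ1^(A+(j:ℤ))) -
      ((k.choose j : ℂ) * Mc^(k-j) * L^j * (∮ ξ1 in C(0,R1), ξ1^(A+1+(j:ℤ))))) *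
       ξ2^(B-1-(k:ℤ)+(j:ℤ)))

theorem my19_P_int (Mc L : ℂ) (R1 : ℝ) (A B : ℤ) (N : ℕ) {R2 : ℝ} (hR2 : 0 < R2) :
    CircleIntegrable (my19_P Mc L R1 A B N) 0 R2 := by
  apply ContinuousOn.circleIntegrable hR2.le
  apply continuousOn_finset_sum; intro k _
  apply continuousOn_finset_sum; intro j _
  exact continuousOn_const.mul (ContinuousOn.zpow₀ continuousOn_id _
    (fun z hz => Or.inl (my19_sphere_ne_zero hR2 hz)))

theorem my19_P_zero (Mc L : ℂ) (R1 : ℝ) (A B : ℤ) (hBA : B ≤ A) (N : ℕ) {R2 : ℝ}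
    (hR2 : 0 < R2) : (∮ ξ2 in C(0, R2), my19_P Mc L R1 A B N ξ2) = 0 := by
  unfold my19_P
  rw [my19_finset_sum _ _ _ _ (fun k _ => ?_)]
  swap
  · apply ContinuousOn.circleIntegrable hR2.le
    apply continuousOn_finset_sum; intro j _
    exact continuousOn_const.mul (ContinuousOn.zpow₀ continuousOn_id _
      (fun z hz => Or.inl (my19_sphere_ne_zero hR2 hz)))
  refine Finset.sum_eq_zero fun k _ => ?_
  rw [my19_finset_sum _ _ _ _ (fun j _ => my19_monomial_int _ hR2 _)]
  refine Finset.sum_eq_zero fun j _ => ?_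
  rw [circleIntegral.integral_const_mul]
  by_cases hj : (A + (j:ℤ) = -1 ∨ A + 1 + (j:ℤ) = -1)
  · rw [my19_zpow (show B-1-(k:ℤ)+(j:ℤ) ≠ -1 by omega) R2, mul_zero]
  · push_neg at hj
    rw [my19_zpow hj.1 R1, my19_zpow hj.2 R1]
    simp

theorem my19_geom (w z : ℂ) (hz : z ≠ 0) (hw : w ≠ z) (N : ℕ) :
    (w - z)⁻¹ = (w/z)^N * (w - z)⁻¹ - ∑ k ∈ Finset.range N, w^k * z^(-1-(k:ℤ)) := by
  induction N with
  | zero => simp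
  | succ n ih =>
    rw [Finset.sum_range_succ]
    have hzn : z ^ (-1 - (n:ℤ)) = (z^(n+1))⁻¹ := by
      rw [← zpow_natCast z (n+1), ← zpow_neg]
      congr 1; push_cast; ring
    have hwz : w - z ≠ 0 := sub_ne_zero.mpr hw
    have step : (w/z)^(n+1) * (w - z)⁻¹ - w^n * z^(-1-(n:ℤ)) = (w/z)^n * (w-z)⁻¹ := by
      rw [hzn, div_pow, div_pow]; field_simp; ring
    linear_combination ih - step

theorem my19_expand (Mc L z x : ℂ) (hx : x ≠ 0) (hz : z ≠ 0) (k : ℕ) (A B : ℤ) :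
    (Mc + L*z*x - x) * (Mc + L*z*x)^k * x^A * z^(B-1-(k:ℤ)) =
    ∑ j ∈ Finset.range (k+2),
      ((((k+1).choose j : ℂ) * Mc^(k+1-j) * L^j * x^(A+(j:ℤ)) -
       ((k.choose j : ℂ)) * Mc^(k-j) * L^j * x^(A+1+(j:ℤ))) * z^(B-1-(k:ℤ)+(j:ℤ))) := by
  have e1 : (Mc + L*z*x)^(k+1) = ∑ j ∈ Finset.range (k+2), (L*z*x)^j * Mc^(k+1-j) * ((k+1).choose j : ℂ) := by
    rw [add_comm Mc]; exact add_pow _ _ _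
  have e2 : (Mc + L*z*x)^k = ∑ j ∈ Finset.range (k+2), (L*z*x)^j * Mc^(k-j) * ((k).choose j : ℂ) := by
    rw [add_comm Mc, add_pow]
    conv_rhs => rw [Finset.sum_range_succ]
    simp [Nat.choose_succ_self]
  have lhs_eq : (Mc + L*z*x - x) * (Mc + L*z*x)^k * x^A * z^(B-1-(k:ℤ)) =
      (Mc + L*z*x)^(k+1) * (x^A * z^(B-1-(k:ℤ))) - (Mc + L*z*x)^k * ((x^(A+1)) * z^(B-1-(k:ℤ))) := by
    rw [zpow_add_one₀ hx, pow_succ]; ring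
  rw [lhs_eq, e1, e2, Finset.sum_mul, Finset.sum_mul, ← Finset.sum_sub_distrib]
  refine Finset.sum_congr rfl fun j hj => ?_
  have hxj : x^A * x^(j:ℕ) = x^(A+(j:ℤ)) := by
    rw [← zpow_natCast x j, ← zpow_add₀ hx]
  have hxj' : x^(A+1) * x^(j:ℕ) = x^(A+1+(j:ℤ)) := by
    rw [← zpow_natCast x j, ← zpow_add₀ hx]
  have hzj : z^(B-1-(k:ℤ)) * z^(j:ℕ) = z^(B-1-(k:ℤ)+(j:ℤ)) := by
    rw [← zpow_natCast z j, ← zpow_add₀ hz]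
  rw [mul_pow, mul_pow, ← hxj, ← hxj', ← hzj]
  ring
theorem my19_inner (Mc L : ℂ) (R1 : ℝ) (hR1 : 0 < R1) (A B : ℤ) (N : ℕ) (ξ2 : ℂ) (hξ2 : ξ2 ≠ 0)
    (hden : ∀ ξ1 ∈ sphere (0:ℂ) R1, Mc + L*ξ2*ξ1 - ξ2 ≠ 0) :
    (∮ ξ1 in C(0, R1), (Mc + L*ξ2*ξ1 - ξ1)/(Mc + L*ξ2*ξ1 - ξ2) * ξ2^B * ξ1^A)
     = (∮ ξ1 in C(0,R1), ((Mc + L*ξ2*ξ1)/ξ2)^N *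
          ((Mc + L*ξ2*ξ1 - ξ1)/(Mc + L*ξ2*ξ1 - ξ2) * ξ2^B * ξ1^A))
       - ∑ k ∈ Finset.range N, ∑ j ∈ Finset.range (k+2),
         ((((k+1).choose j : ℂ) * Mc^(k+1-j) * L^j * (∮ ξ1 in C(0,R1), ξ1^(A+(j:ℤ))) -
           ((k.choose j : ℂ) * Mc^(k-j) * L^j * (∮ ξ1 in C(0,R1), ξ1^(A+1+(j:ℤ))))) *
            ξ2^(B-1-(k:ℤ)+(j:ℤ))) := by
  have hcontw : Continuous (fun ξ1 : ℂ => Mc + L*ξ2*ξ1) := by continuity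
  have hGint : CircleIntegrable (fun ξ1 => ∑ k ∈ Finset.range N,
      (Mc + L*ξ2*ξ1 - ξ1) * (Mc + L*ξ2*ξ1)^k * ξ1^A * ξ2^(B-1-(k:ℤ))) 0 R1 := by
    apply ContinuousOn.circleIntegrable hR1.le
    apply continuousOn_finset_sum
    intro k _
    apply ContinuousOn.mul
    apply ContinuousOn.mul
    · exact ((hcontw.sub continuous_id).continuousOn.mul
        ((hcontw.pow k).continuousOn))
    · exact ContinuousOn.zpow₀ continuousOn_id A
        (fun z hz => Or.inl (my19_sphere_ne_zero hR1 hz))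
    · exact continuousOn_const
  have hremint : CircleIntegrable (fun ξ1 => ((Mc + L*ξ2*ξ1)/ξ2)^N *
      ((Mc + L*ξ2*ξ1 - ξ1)/(Mc + L*ξ2*ξ1 - ξ2) * ξ2^B * ξ1^A)) 0 R1 := by
    apply ContinuousOn.circleIntegrable hR1.le
    apply ContinuousOn.mul
    · exact ((hcontw.div_const ξ2).pow N).continuousOn
    · apply ContinuousOn.mul
      apply ContinuousOn.mul
      · exact ContinuousOn.div ((hcontw.sub continuous_id).continuousOn)
          ((hcontw.sub continuous_const).continuousOn) hden
      · exact continuousOn_const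
      · exact ContinuousOn.zpow₀ continuousOn_id A
          (fun z hz => Or.inl (my19_sphere_ne_zero hR1 hz))
  have hdec : Set.EqOn (fun ξ1 : ℂ => (Mc + L*ξ2*ξ1 - ξ1)/(Mc + L*ξ2*ξ1 - ξ2) * ξ2^B * ξ1^A)
      (fun ξ1 : ℂ => ((Mc + L*ξ2*ξ1)/ξ2)^N *
          ((Mc + L*ξ2*ξ1 - ξ1)/(Mc + L*ξ2*ξ1 - ξ2) * ξ2^B * ξ1^A)
        - ∑ k ∈ Finset.range N,
            (Mc + L*ξ2*ξ1 - ξ1) * (Mc + L*ξ2*ξ1)^k * ξ1^A * ξ2^(B-1-(k:ℤ)))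
      (sphere (0:ℂ) R1) := by
    intro ξ1 h1
    have hd := hden ξ1 h1
    have hwz : Mc + L*ξ2*ξ1 ≠ ξ2 := by
      intro h; exact hd (by rw [h]; ring)
    have hg := my19_geom (Mc + L*ξ2*ξ1) ξ2 hξ2 hwz N
    have key : (Mc+L*ξ2*ξ1-ξ2)⁻¹ - ((Mc+L*ξ2*ξ1)/ξ2)^N * (Mc+L*ξ2*ξ1-ξ2)⁻¹
        = -∑ k ∈ Finset.range N, (Mc+L*ξ2*ξ1)^k * ξ2^(-1-(k:ℤ)) := by
      linear_combination hg
    have expand_sum : (Mc+L*ξ2*ξ1-ξ1) * (∑ k ∈ Finset.range N, (Mc+L*ξ2*ξ1)^k * ξ2^(-1-(k:ℤ))) * ξ2^B * ξ1^A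
        = ∑ k ∈ Finset.range N, (Mc+L*ξ2*ξ1-ξ1)*(Mc+L*ξ2*ξ1)^k*ξ1^A*ξ2^(B-1-(k:ℤ)) := by
      rw [Finset.mul_sum, Finset.sum_mul, Finset.sum_mul]
      exact Finset.sum_congr rfl fun k _ => by
        rw [show (B-1-(k:ℤ)) = (-1-(k:ℤ)) + B by ring, zpow_add₀ hξ2]; ring
    simp only
    rw [div_eq_mul_inv, div_eq_mul_inv]
    linear_combination ((Mc+L*ξ2*ξ1-ξ1) * ξ2^B * ξ1^A) * key - expand_sum
  rw [circleIntegral.integral_congr hR1.le hdec,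
    circleIntegral.integral_sub hremint hGint]
  congr 1
  rw [my19_finset_sum _ _ _ _ (fun k _ => ?_)]
  swap
  · apply ContinuousOn.circleIntegrable hR1.le
    apply ContinuousOn.mul
    apply ContinuousOn.mul
    · exact ((hcontw.sub continuous_id).continuousOn.mul ((hcontw.pow k).continuousOn))
    · exact ContinuousOn.zpow₀ continuousOn_id A
        (fun z hz => Or.inl (my19_sphere_ne_zero hR1 hz))
    · exact continuousOn_const
  refine Finset.sum_congr rfl fun k _ => ?_
  rw [circleIntegral.integral_congr hR1.le
    (fun ξ1 h1 => my19_expand Mc L ξ2 ξ1 (my19_sphere_ne_zero hR1 h1) hξ2 k A B)]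
  have hmono : ∀ j : ℕ, CircleIntegrable (fun ξ1 : ℂ =>
      ((((k+1).choose j : ℂ) * Mc^(k+1-j) * L^j * ξ1^(A+(j:ℤ)) -
        ((k.choose j : ℂ)) * Mc^(k-j) * L^j * ξ1^(A+1+(j:ℤ))) * ξ2^(B-1-(k:ℤ)+(j:ℤ)))) 0 R1 := by
    intro j
    apply ContinuousOn.circleIntegrable hR1.le
    have hz : ∀ z ∈ sphere (0:ℂ) R1, (id z ≠ 0) ∨ (0:ℤ) ≤ A := fun z hz => Or.inl (my19_sphere_ne_zero hR1 hz)
    refine ContinuousOn.mul (ContinuousOn.sub ?_ ?_) continuousOn_const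
    · exact continuousOn_const.mul (ContinuousOn.zpow₀ continuousOn_id _
        (fun z hz => Or.inl (my19_sphere_ne_zero hR1 hz)))
    · exact continuousOn_const.mul (ContinuousOn.zpow₀ continuousOn_id _
        (fun z hz => Or.inl (my19_sphere_ne_zero hR1 hz)))
  rw [my19_finset_sum _ _ _ _ (fun j _ => hmono j)]
  refine Finset.sum_congr rfl fun j _ => ?_
  have hsc := circleIntegral.integral_smul_const
    (fun ξ1 : ℂ => (((k+1).choose j : ℂ) * Mc^(k+1-j) * L^j * ξ1^(A+(j:ℤ)) -
      ((k.choose j : ℂ)) * Mc^(k-j) * L^j * ξ1^(A+1+(j:ℤ)))) (ξ2^(B-1-(k:ℤ)+(j:ℤ))) 0 R1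
  simp only [smul_eq_mul] at hsc
  rw [hsc]
  congr 1
  rw [circleIntegral.integral_sub (my19_monomial_int (A+(j:ℤ)) hR1 _)
    (my19_monomial_int (A+1+(j:ℤ)) hR1 _),
    circleIntegral.integral_const_mul, circleIntegral.integral_const_mul]
theorem stmt_19 (lam mu : ℝ) (hsum : lam + mu = 1) (hmu1 : 1/2 < mu) (hmu2 : mu ≤ 1)
    (R1 R2 : ℝ) (h1 : 1 < R1) (h12 : R1 < R2) (hc : lam ≠ 0 → R2 < mu / lam)
    (x1 x2 y1 y2 : ℤ) (hx : 0 ≤ x2 - x1 + y2 - y1) :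
    (∮ ξ2 in C(0, R2), ∮ ξ1 in C(0, R1),
        ((mu : ℂ) + (lam : ℂ) * ξ2 * ξ1 - ξ1) / ((mu : ℂ) + (lam : ℂ) * ξ2 * ξ1 - ξ2) *
          ξ2 ^ (x1 - y2 - 1) * ξ1 ^ (x2 - y1 - 1)) = 0 := by
  set A : ℤ := x2 - y1 - 1 with hA
  set B : ℤ := x1 - y2 - 1 with hB
  have hBA : B ≤ A := by omega
  by_cases hInt : CircleIntegrable (fun ξ2 => ∮ ξ1 in C(0, R1),
      ((mu : ℂ) + (lam : ℂ) * ξ2 * ξ1 - ξ1) / ((mu : ℂ) + (lam : ℂ) * ξ2 * ξ1 - ξ2) *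
        ξ2 ^ B * ξ1 ^ A) 0 R2
  swap
  · exact circleIntegral.integral_undef hInt
  have hR1 : (0:ℝ) < R1 := by linarith
  have hR2 : (0:ℝ) < R2 := by linarith
  have hlam0 : (0:ℝ) ≤ lam := by linarith
  have hmu0 : (0:ℝ) < mu := by linarith
  have hKlt : mu + lam * R1 * R2 < R2 := my19_key lam mu R1 R2 hsum hmu2 h1 h12 hc
  have hK : (0:ℝ) < R2 - (mu + lam*R1*R2) := by linarith
  have hn1 : ∀ z ∈ sphere (0:ℂ) R1, ‖z‖ = R1 := fun z hz => by
    simpa [mem_sphere_iff_norm, sub_zero] using hz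
  have hn2 : ∀ z ∈ sphere (0:ℂ) R2, ‖z‖ = R2 := fun z hz => by
    simpa [mem_sphere_iff_norm, sub_zero] using hz
  have hwnorm : ∀ ξ2 ∈ sphere (0:ℂ) R2, ∀ ξ1 ∈ sphere (0:ℂ) R1,
      ‖(mu:ℂ) + (lam:ℂ)*ξ2*ξ1‖ ≤ mu + lam*R1*R2 := by
    intro ξ2 h2 ξ1 h1'
    calc ‖(mu:ℂ) + (lam:ℂ)*ξ2*ξ1‖ ≤ ‖(mu:ℂ)‖ + ‖(lam:ℂ)*ξ2*ξ1‖ := norm_add_le _ _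
      _ ≤ mu + lam*R1*R2 := by
          rw [norm_mul, norm_mul, hn2 _ h2, hn1 _ h1', Complex.norm_real, Complex.norm_real,
            Real.norm_of_nonneg hmu0.le, Real.norm_of_nonneg hlam0]
          nlinarith
  have hden : ∀ ξ2 ∈ sphere (0:ℂ) R2, ∀ ξ1 ∈ sphere (0:ℂ) R1,
      R2 - (mu + lam*R1*R2) ≤ ‖(mu:ℂ)+(lam:ℂ)*ξ2*ξ1 - ξ2‖ := by
    intro ξ2 h2 ξ1 h1'
    have hw := hwnorm ξ2 h2 ξ1 h1'
    calc R2 - (mu + lam*R1*R2) ≤ ‖ξ2‖ - ‖(mu:ℂ)+(lam:ℂ)*ξ2*ξ1‖ := by rw [hn2 _ h2]; linarith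
      _ ≤ ‖ξ2 - ((mu:ℂ)+(lam:ℂ)*ξ2*ξ1)‖ := norm_sub_norm_le _ _
      _ = ‖(mu:ℂ)+(lam:ℂ)*ξ2*ξ1 - ξ2‖ := norm_sub_rev _ _
  have hdenne : ∀ ξ2 ∈ sphere (0:ℂ) R2, ∀ ξ1 ∈ sphere (0:ℂ) R1,
      (mu:ℂ)+(lam:ℂ)*ξ2*ξ1 - ξ2 ≠ 0 := by
    intro ξ2 h2 ξ1 h1' h
    have := hden ξ2 h2 ξ1 h1'
    rw [h, norm_zero] at this; linarith
  set ρ : ℝ := (mu + lam*R1*R2)/R2 with hρdef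
  have hρ0 : 0 ≤ ρ := by positivity
  have hρ1 : ρ < 1 := (div_lt_one hR2).mpr hKlt
  set Mb : ℝ := (mu + lam*R1*R2 + R1)/(R2 - (mu+lam*R1*R2)) * (R2^B * R1^A) with hMbdef
  have hMb0 : 0 ≤ Mb := by
    rw [hMbdef]; positivity
  have hrembound : ∀ (N:ℕ), ∀ ξ2 ∈ sphere (0:ℂ) R2, ∀ ξ1 ∈ sphere (0:ℂ) R1,
      ‖(((mu:ℂ)+(lam:ℂ)*ξ2*ξ1)/ξ2)^N * (((mu:ℂ)+(lam:ℂ)*ξ2*ξ1 - ξ1)/((mu:ℂ)+(lam:ℂ)*ξ2*ξ1 - ξ2)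
        * ξ2^B * ξ1^A)‖ ≤ ρ^N * Mb := by
    intro N ξ2 h2 ξ1 h1'
    have hw := hwnorm ξ2 h2 ξ1 h1'
    have hd := hden ξ2 h2 ξ1 h1'
    have hnum : ‖(mu:ℂ)+(lam:ℂ)*ξ2*ξ1 - ξ1‖ ≤ mu + lam*R1*R2 + R1 := by
      calc ‖(mu:ℂ)+(lam:ℂ)*ξ2*ξ1 - ξ1‖ ≤ ‖(mu:ℂ)+(lam:ℂ)*ξ2*ξ1‖ + ‖ξ1‖ := norm_sub_le _ _
        _ ≤ mu + lam*R1*R2 + R1 := by rw [hn1 _ h1']; linarith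
    have hq : ‖(mu:ℂ)+(lam:ℂ)*ξ2*ξ1 - ξ1‖/‖(mu:ℂ)+(lam:ℂ)*ξ2*ξ1 - ξ2‖
        ≤ (mu + lam*R1*R2 + R1)/(R2 - (mu+lam*R1*R2)) :=
      div_le_div₀ (by positivity) hnum hK hd
    rw [norm_mul, norm_pow, norm_div, norm_mul, norm_mul, norm_div, norm_zpow, norm_zpow,
      hn2 _ h2, hn1 _ h1']
    have hfrac : ‖(mu:ℂ)+(lam:ℂ)*ξ2*ξ1‖/R2 ≤ ρ := by
      rw [hρdef]; exact (div_le_div_iff_of_pos_right hR2).mpr hw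
    apply mul_le_mul (pow_le_pow_left₀ (by positivity) hfrac N) ?_ (by positivity)
      (pow_nonneg hρ0 N)
    rw [hMbdef, mul_assoc]
    exact mul_le_mul_of_nonneg_right hq (by positivity)
  have main : ∀ N : ℕ, ‖∮ ξ2 in C(0, R2), ∮ ξ1 in C(0, R1),
      ((mu : ℂ) + (lam : ℂ) * ξ2 * ξ1 - ξ1) / ((mu : ℂ) + (lam : ℂ) * ξ2 * ξ1 - ξ2) *
        ξ2 ^ B * ξ1 ^ A‖ ≤ 2*Real.pi*R2*(2*Real.pi*R1*(ρ^N*Mb)) := by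
    intro N
    have hinner : ∀ ξ2 ∈ sphere (0:ℂ) R2,
        (∮ ξ1 in C(0, R1), ((mu : ℂ) + (lam : ℂ) * ξ2 * ξ1 - ξ1) /
          ((mu : ℂ) + (lam : ℂ) * ξ2 * ξ1 - ξ2) * ξ2 ^ B * ξ1 ^ A)
        = (∮ ξ1 in C(0,R1), (((mu:ℂ) + (lam:ℂ)*ξ2*ξ1)/ξ2)^N *
            (((mu:ℂ) + (lam:ℂ)*ξ2*ξ1 - ξ1)/((mu:ℂ) + (lam:ℂ)*ξ2*ξ1 - ξ2) * ξ2^B * ξ1^A))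
          - my19_P (mu:ℂ) (lam:ℂ) R1 A B N ξ2 := by
      intro ξ2 h2
      have := my19_inner (mu:ℂ) (lam:ℂ) R1 hR1 A B N ξ2 (my19_sphere_ne_zero hR2 h2)
        (fun ξ1 h1' => hdenne ξ2 h2 ξ1 h1')
      simpa only [my19_P] using this
    have hRemIint : CircleIntegrable (fun ξ2 => ∮ ξ1 in C(0,R1),
        (((mu:ℂ) + (lam:ℂ)*ξ2*ξ1)/ξ2)^N *
          (((mu:ℂ) + (lam:ℂ)*ξ2*ξ1 - ξ1)/((mu:ℂ) + (lam:ℂ)*ξ2*ξ1 - ξ2) * ξ2^B * ξ1^A)) 0 R2 := by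
      have hcomp : (fun θ : ℝ => (fun ξ2 => ∮ ξ1 in C(0,R1), (((mu:ℂ) + (lam:ℂ)*ξ2*ξ1)/ξ2)^N *
            (((mu:ℂ) + (lam:ℂ)*ξ2*ξ1 - ξ1)/((mu:ℂ) + (lam:ℂ)*ξ2*ξ1 - ξ2) * ξ2^B * ξ1^A))
              (circleMap 0 R2 θ))
          = (fun θ : ℝ => (∮ ξ1 in C(0, R1),
              ((mu : ℂ) + (lam : ℂ) * (circleMap 0 R2 θ) * ξ1 - ξ1) /
              ((mu : ℂ) + (lam : ℂ) * (circleMap 0 R2 θ) * ξ1 - (circleMap 0 R2 θ)) *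
                (circleMap 0 R2 θ) ^ B * ξ1 ^ A)
            + my19_P (mu:ℂ) (lam:ℂ) R1 A B N (circleMap 0 R2 θ)) := by
        funext θ
        have := hinner (circleMap 0 R2 θ) (circleMap_mem_sphere 0 hR2.le θ)
        simp only at this ⊢
        rw [this]; ring
      show IntervalIntegrable _ volume 0 (2*Real.pi)
      rw [hcomp]
      exact IntervalIntegrable.add hInt (my19_P_int (mu:ℂ) (lam:ℂ) R1 A B N hR2)
    calc ‖∮ ξ2 in C(0, R2), ∮ ξ1 in C(0, R1),
          ((mu : ℂ) + (lam : ℂ) * ξ2 * ξ1 - ξ1) / ((mu : ℂ) + (lam : ℂ) * ξ2 * ξ1 - ξ2) *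
            ξ2 ^ B * ξ1 ^ A‖
        = ‖(∮ ξ2 in C(0, R2), ((∮ ξ1 in C(0,R1), (((mu:ℂ) + (lam:ℂ)*ξ2*ξ1)/ξ2)^N *
            (((mu:ℂ) + (lam:ℂ)*ξ2*ξ1 - ξ1)/((mu:ℂ) + (lam:ℂ)*ξ2*ξ1 - ξ2) * ξ2^B * ξ1^A))
            - my19_P (mu:ℂ) (lam:ℂ) R1 A B N ξ2))‖ := by
          rw [circleIntegral.integral_congr hR2.le (fun ξ2 h2 => hinner ξ2 h2)]
      _ = ‖∮ ξ2 in C(0, R2), ∮ ξ1 in C(0,R1), (((mu:ℂ) + (lam:ℂ)*ξ2*ξ1)/ξ2)^N *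
            (((mu:ℂ) + (lam:ℂ)*ξ2*ξ1 - ξ1)/((mu:ℂ) + (lam:ℂ)*ξ2*ξ1 - ξ2) * ξ2^B * ξ1^A)‖ := by
          rw [circleIntegral.integral_sub hRemIint (my19_P_int (mu:ℂ) (lam:ℂ) R1 A B N hR2),
            my19_P_zero (mu:ℂ) (lam:ℂ) R1 A B hBA N hR2, sub_zero]
      _ ≤ 2*Real.pi*R2*(2*Real.pi*R1*(ρ^N*Mb)) := by
          have hb := circleIntegral.norm_integral_le_of_norm_le_const (c := (0:ℂ)) hR2.le
            (f := fun ξ2 => ∮ ξ1 in C(0,R1), (((mu:ℂ) + (lam:ℂ)*ξ2*ξ1)/ξ2)^N *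
              (((mu:ℂ) + (lam:ℂ)*ξ2*ξ1 - ξ1)/((mu:ℂ) + (lam:ℂ)*ξ2*ξ1 - ξ2) * ξ2^B * ξ1^A))
            (C := 2*Real.pi*R1*(ρ^N*Mb)) ?_
          · exact hb
          · intro ξ2 h2
            have hb1 := circleIntegral.norm_integral_le_of_norm_le_const (c := (0:ℂ)) hR1.le
              (f := fun ξ1 => (((mu:ℂ) + (lam:ℂ)*ξ2*ξ1)/ξ2)^N *
                (((mu:ℂ) + (lam:ℂ)*ξ2*ξ1 - ξ1)/((mu:ℂ) + (lam:ℂ)*ξ2*ξ1 - ξ2) * ξ2^B * ξ1^A))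
              (C := ρ^N*Mb) (fun ξ1 h1' => hrembound N ξ2 h2 ξ1 h1')
            exact hb1
  have hC : Tendsto (fun N : ℕ => 2*Real.pi*R2*(2*Real.pi*R1*(ρ^N*Mb))) atTop (nhds 0) := by
    have heq : (fun N : ℕ => 2*Real.pi*R2*(2*Real.pi*R1*(ρ^N*Mb)))
        = fun N : ℕ => (2*Real.pi*R2*(2*Real.pi*R1*Mb)) * ρ^N := by funext N; ring
    rw [heq]
    simpa using (tendsto_pow_atTop_nhds_zero_of_lt_one hρ0 hρ1).const_mul
      (2*Real.pi*R2*(2*Real.pi*R1*Mb))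
  have hfin : ‖∮ ξ2 in C(0, R2), ∮ ξ1 in C(0, R1),
      ((mu : ℂ) + (lam : ℂ) * ξ2 * ξ1 - ξ1) / ((mu : ℂ) + (lam : ℂ) * ξ2 * ξ1 - ξ2) *
        ξ2 ^ B * ξ1 ^ A‖ ≤ 0 := ge_of_tendsto' hC main
  exact norm_le_zero_iff.mp hfin
end
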